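/- Fix n ≥ 2, a player index i, samples x^{(1)},…,x^{(m)} ∈ {−1,+1}^n, and constants c^{(1)},…,c^{(m)} ≥ 0. Define the logistic training loss ℓ̂(w,b) = (1/m)·∑_l log( c^{(l)} + 1 + exp(−x_i^{(l)}·(wᵀ x_{−i}^{(l)} − b)) ) for w ∈ ℝ^{n−1}, b ∈ ℝ. Then (w,b) = (0,0) is a global minimizer of ℓ̂ if and only if for every j ≠ i, ∑_l 1[x_i^{(l)} x_j^{(l)} = 1]/(c^{(l)}+2) = ∑_l 1[x_i^{(l)} x_j^{(l)} = −1]/(c^{(l)}+2), and ∑_l 1[x_i^{(l)} = 1]/(c^{(l)}+2) = ∑_l 1[x_i^{(l)} = −1]/(c^{(l)}+2). -/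

import Mathlib

open Finset
open scoped Classical BigOperators

theorem logLB (c z : ℝ) (hc : 0 ≤ c) :
    Real.log (c + 2) - z / (c + 2) ≤ Real.log (c + 1 + Real.exp (-z)) := by
  have hp : (0:ℝ) < c + 2 := by linarith
  set u : ℝ := -z / (c + 2) with hu
  have h1 : (-u) + 1 ≤ Real.exp (-u) := Real.add_one_le_exp _
  have h2 : (c+1)*u + 1 ≤ Real.exp ((c+1)*u) := Real.add_one_le_exp _
  have he : Real.exp ((c+1)*u) * Real.exp u = Real.exp (-z) := by
    rw [← Real.exp_add]; congr 1; field_simp [hu]; rw [hu]; field_simp; ring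
  have e1 : Real.exp (-u) * Real.exp u = 1 := by
    rw [← Real.exp_add]; simp
  have p1 : ((-u)+1) * Real.exp u ≤ 1 := by
    calc ((-u)+1) * Real.exp u ≤ Real.exp (-u) * Real.exp u :=
          mul_le_mul_of_nonneg_right h1 (Real.exp_pos u).le
      _ = 1 := e1
  have p2 : ((c+1)*u+1) * Real.exp u ≤ Real.exp (-z) := by
    calc ((c+1)*u+1) * Real.exp u ≤ Real.exp ((c+1)*u) * Real.exp u :=
          mul_le_mul_of_nonneg_right h2 (Real.exp_pos u).le
      _ = Real.exp (-z) := he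
  have p1' := mul_le_mul_of_nonneg_left p1 (by linarith : (0:ℝ) ≤ c+1)
  have key : (c + 2) * Real.exp u ≤ c + 1 + Real.exp (-z) := by nlinarith [Real.exp_pos u]
  have hlog := Real.log_le_log (by positivity) key
  rw [Real.log_mul (ne_of_gt hp) (ne_of_gt (Real.exp_pos u)), Real.log_exp] at hlog
  have huz : u = -(z/(c+2)) := by rw [hu]; ring
  linarith [hlog]

theorem derivKey (m : ℕ) (hm : 0 < m) (c : Fin m → ℝ) (hc : ∀ l, 0 ≤ c l)
    (d : Fin m → ℝ)
    (h : ∀ t : ℝ, (1/(m:ℝ)) * ∑ l, Real.log (c l + 2) ≤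
        (1/(m:ℝ)) * ∑ l, Real.log (c l + 1 + Real.exp (-(d l * t)))) :
    ∑ l, d l / (c l + 2) = 0 := by
  set ψ : ℝ → ℝ := fun t => ∑ l, Real.log (c l + 1 + Real.exp (-(d l * t))) with hψ
  have hmin : IsLocalMin ψ 0 := by
    apply Filter.Eventually.of_forall
    intro t
    have hm' : (0:ℝ) < 1/(m:ℝ) := by positivity
    have h0 : ψ 0 = ∑ l, Real.log (c l + 2) := by
      simp [hψ]
      apply Finset.sum_congr rfl
      intro l _
      ring_nf
    rw [h0]
    have := h t
    have hψt : ψ t = ∑ l, Real.log (c l + 1 + Real.exp (-(d l * t))) := rfl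
    rw [hψt]
    exact le_of_mul_le_mul_left (by simpa [one_div, mul_comm] using this) hm'
  have hderiv : HasDerivAt ψ (∑ l, -(d l) / (c l + 2)) 0 := by
    apply HasDerivAt.fun_sum
    intro l _
    show HasDerivAt (fun t => Real.log (c l + 1 + Real.exp (-(d l * t)))) (-(d l) / (c l + 2)) 0
    have hbase : HasDerivAt (fun t : ℝ => c l + 1 + Real.exp (-(d l * t)))
        (Real.exp (-(d l * 0)) * -(d l)) 0 := by
      have h1 : HasDerivAt (fun t : ℝ => -(d l * t)) (-(d l)) 0 := by
        simpa using ((hasDerivAt_id (0:ℝ)).const_mul (d l)).fun_neg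
      exact (h1.exp).const_add _
    have hpos : c l + 1 + Real.exp (-(d l * 0)) ≠ 0 := by
      have := Real.exp_pos (-(d l * 0)); have := hc l; nlinarith
    have := hbase.log hpos
    convert this using 1
    simp
    ring
  have := hmin.hasDerivAt_eq_zero hderiv
  have h2 : ∑ l, d l / (c l + 2) = -∑ l, -(d l) / (c l + 2) := by
    rw [← Finset.sum_neg_distrib]
    apply Finset.sum_congr rfl; intro l _; ring
  rw [h2, this, neg_zero]

/-- The logistic training loss
`ℓ̂(w,b) = (1/m) ∑_l log(c^{(l)} + 1 + exp(−x_i^{(l)}(wᵀ x_{−i}^{(l)} − b)))`, where the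
weight vector `w ∈ ℝ^{n−1}` is indexed by the players `j ≠ i`. -/
noncomputable def logisticObj (n m : ℕ) (i : Fin n) (xs : Fin m → Fin n → ℝ) (c : Fin m → ℝ)
    (w : {j : Fin n // j ≠ i} → ℝ) (b : ℝ) : ℝ :=
  (1 / (m : ℝ)) *
    ∑ l, Real.log (c l + 1 +
      Real.exp (-(xs l i * ((∑ j : {j : Fin n // j ≠ i}, w j * xs l (j : Fin n)) - b))))

/-- `(w,b) = (0,0)` is a global minimizer of the logistic training loss iff
the weighted agreement/disagreement counts (weights `1/(c^{(l)}+2)`) balance for every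
`j ≠ i` and for the bias. -/
theorem stmt11 (n m : ℕ) (hn : 2 ≤ n) (i : Fin n)
    (xs : Fin m → Fin n → ℝ) (hxs : ∀ l j, xs l j = 1 ∨ xs l j = -1)
    (c : Fin m → ℝ) (hc : ∀ l, 0 ≤ c l) :
    (∀ (w : {j : Fin n // j ≠ i} → ℝ) (b : ℝ),
        logisticObj n m i xs c 0 0 ≤ logisticObj n m i xs c w b) ↔
      ((∀ j : Fin n, j ≠ i →
          ∑ l, (if xs l i * xs l j = 1 then (1 : ℝ) else 0) / (c l + 2) =
            ∑ l, (if xs l i * xs l j = -1 then (1 : ℝ) else 0) / (c l + 2)) ∧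
        (∑ l, (if xs l i = 1 then (1 : ℝ) else 0) / (c l + 2) =
          ∑ l, (if xs l i = -1 then (1 : ℝ) else 0) / (c l + 2))) := by
  -- value at (0,0)
  have hzero : logisticObj n m i xs c 0 0 = (1/(m:ℝ)) * ∑ l, Real.log (c l + 2) := by
    unfold logisticObj
    congr 1
    apply Finset.sum_congr rfl
    intro l _
    norm_num
    ring_nf
  -- conversion from signed sums to if-sums
  have hconv : ∀ (d : Fin m → ℝ), (∀ l, d l = 1 ∨ d l = -1) →
      (∑ l, d l / (c l + 2) = 0 ↔
        ∑ l, (if d l = 1 then (1:ℝ) else 0) / (c l + 2) =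
          ∑ l, (if d l = -1 then (1:ℝ) else 0) / (c l + 2)) := by
    intro d hd
    have hsum : ∑ l, d l / (c l + 2) =
        ∑ l, (if d l = 1 then (1:ℝ) else 0) / (c l + 2) -
          ∑ l, (if d l = -1 then (1:ℝ) else 0) / (c l + 2) := by
      rw [← Finset.sum_sub_distrib]
      apply Finset.sum_congr rfl
      intro l _
      rcases hd l with h | h <;> rw [h] <;> norm_num [neg_div]
    rw [hsum, sub_eq_zero]
  constructor
  · intro hmin
    rcases Nat.eq_zero_or_pos m with hm | hm
    · subst hm
      constructor
      · intro j hj; simp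
      · simp
    constructor
    · intro j hj
      rw [← hconv (fun l => xs l i * xs l j) (fun l => by
        rcases hxs l i with h1 | h1 <;> rcases hxs l j with h2 | h2 <;>
          simp [h1, h2])]
      apply derivKey m hm c hc
      intro t
      have := hmin (fun k => if k = (⟨j, hj⟩ : {j : Fin n // j ≠ i}) then t else 0) 0
      rw [hzero] at this
      have hr : logisticObj n m i xs c
          (fun k => if k = (⟨j, hj⟩ : {j : Fin n // j ≠ i}) then t else 0) 0 =
          (1/(m:ℝ)) * ∑ l, Real.log (c l + 1 + Real.exp (-((xs l i * xs l j) * t))) := by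
        unfold logisticObj
        congr 1
        apply Finset.sum_congr rfl
        intro l _
        have hsum : (∑ k : {j : Fin n // j ≠ i},
            (if k = (⟨j, hj⟩ : {j : Fin n // j ≠ i}) then t else 0) * xs l (k : Fin n))
            = t * xs l j := by
          simp [ite_mul, Finset.sum_ite_eq']
        rw [hsum, show -(xs l i * (t * xs l j - 0)) = -((xs l i * xs l j) * t) from by ring]
      rw [hr] at this
      exact this
    · rw [← hconv (fun l => xs l i) (fun l => hxs l i)]
      apply derivKey m hm c hc
      intro t
      have := hmin 0 (-t)
      rw [hzero] at this
      have hr : logisticObj n m i xs c 0 (-t) =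
          (1/(m:ℝ)) * ∑ l, Real.log (c l + 1 + Real.exp (-(xs l i * t))) := by
        unfold logisticObj
        congr 1
        apply Finset.sum_congr rfl
        intro l _
        have hsum : (∑ k : {j : Fin n // j ≠ i}, (0 : {j : Fin n // j ≠ i} → ℝ) k * xs l (k : Fin n)) = 0 := by
          simp
        rw [hsum, show -(xs l i * ((0:ℝ) - -t)) = -(xs l i * t) from by ring]
      rw [hr] at this
      exact this
  · rintro ⟨hJ, hB⟩ w b
    have Sj : ∀ k : {j : Fin n // j ≠ i}, ∑ l, (xs l i * xs l (k : Fin n)) / (c l + 2) = 0 := by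
      intro k
      rw [hconv (fun l => xs l i * xs l (k : Fin n)) (fun l => by
        rcases hxs l i with h1 | h1 <;> rcases hxs l (k : Fin n) with h2 | h2 <;>
          simp [h1, h2])]
      exact hJ k.1 k.2
    have Sb : ∑ l, xs l i / (c l + 2) = 0 := by
      rw [hconv (fun l => xs l i) (fun l => hxs l i)]; exact hB
    -- the directional sum vanishes
    have hT : ∑ l, (xs l i * ((∑ k : {j : Fin n // j ≠ i}, w k * xs l (k : Fin n)) - b))
        / (c l + 2) = 0 := by
      have expand : ∀ l, (xs l i * ((∑ k : {j : Fin n // j ≠ i}, w k * xs l (k : Fin n)) - b))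
          / (c l + 2) =
          (∑ k : {j : Fin n // j ≠ i}, w k * ((xs l i * xs l (k : Fin n)) / (c l + 2)))
            - b * (xs l i / (c l + 2)) := by
        intro l
        simp only [← mul_div_assoc]
        rw [← Finset.sum_div, ← sub_div]
        congr 1
        rw [mul_sub, Finset.mul_sum]
        congr 1
        · apply Finset.sum_congr rfl
          intro k _
          ring
        · ring
      calc ∑ l, (xs l i * ((∑ k : {j : Fin n // j ≠ i}, w k * xs l (k : Fin n)) - b)) / (c l + 2)
          = ∑ l, ((∑ k : {j : Fin n // j ≠ i}, w k * ((xs l i * xs l (k : Fin n)) / (c l + 2)))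
            - b * (xs l i / (c l + 2))) := Finset.sum_congr rfl (fun l _ => expand l)
        _ = (∑ k : {j : Fin n // j ≠ i}, w k * ∑ l, (xs l i * xs l (k : Fin n)) / (c l + 2))
            - b * ∑ l, xs l i / (c l + 2) := by
            rw [Finset.sum_sub_distrib, Finset.sum_comm, ← Finset.mul_sum]
            congr 1
            apply Finset.sum_congr rfl
            intro k _
            rw [Finset.mul_sum]
        _ = 0 := by
            rw [Sb]
            simp only [Sj]
            simp
    rw [hzero]
    unfold logisticObj
    have hm' : (0:ℝ) ≤ 1/(m:ℝ) := by positivity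
    apply mul_le_mul_of_nonneg_left _ hm'
    calc ∑ l, Real.log (c l + 2)
        = ∑ l, (Real.log (c l + 2) -
            (xs l i * ((∑ k : {j : Fin n // j ≠ i}, w k * xs l (k : Fin n)) - b)) / (c l + 2)) := by
          rw [Finset.sum_sub_distrib, hT, sub_zero]
      _ ≤ _ := by
          apply Finset.sum_le_sum
          intro l _
          exact logLB (c l) _ (hc l)
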